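/- Let δ ∈ (0,1), let 𝒦 be a finite set, x : 𝒦 → ℝ≥0, f(K) := ((1+(|K|-1)δ)/|K|)·Σ_{k∈K} x k for nonempty K ⊆ 𝒦, and let K* be a maximizer of f with |K*| = m. Then every j ∈ 𝒦 \ K* satisfies (1-δ)·Σ_{k∈K*} x k ≥ m·(1+m·δ)·x j; that is, x j ≤ (1-δ)·Σ_{k∈K*} x k / (m·(1+m·δ)). -/

import Mathlib

theorem non_dominant_small {ι : Type*} [Fintype ι] [DecidableEq ι]
    (δ : ℝ) (hδ0 : 0 < δ) (hδ1 : δ < 1) (x : ι → ℝ) (hx : ∀ k, 0 ≤ x k)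
    (f : Finset ι → ℝ)
    (hf : ∀ K : Finset ι, f K = ((1 + ((K.card : ℝ) - 1) * δ) / (K.card : ℝ)) * ∑ k ∈ K, x k)
    (Kstar : Finset ι) (hKne : Kstar.Nonempty)
    (hmax : ∀ K : Finset ι, K.Nonempty → f K ≤ f Kstar)
    (m : ℕ) (hm : Kstar.card = m) :
    ∀ j ∉ Kstar,
      (m : ℝ) * (1 + (m : ℝ) * δ) * x j ≤ (1 - δ) * ∑ k ∈ Kstar, x k ∧
      x j ≤ (1 - δ) * (∑ k ∈ Kstar, x k) / ((m : ℝ) * (1 + (m : ℝ) * δ)) := by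
  intro j hj
  have hm1 : 1 ≤ m := by
    have := Finset.card_pos.mpr hKne
    omega
  have hM1 : (1 : ℝ) ≤ (m : ℝ) := by exact_mod_cast hm1
  have hMpos : (0 : ℝ) < (m : ℝ) := by linarith
  have hDpos : (0 : ℝ) < (m : ℝ) * (1 + (m : ℝ) * δ) := by positivity
  have key := hmax (insert j Kstar) ⟨j, Finset.mem_insert_self j Kstar⟩
  rw [hf, hf, Finset.card_insert_of_notMem hj, Finset.sum_insert hj, hm] at key
  push_cast at key
  set S := ∑ k ∈ Kstar, x k with hS
  have hkey : (m : ℝ) * (1 + (m : ℝ) * δ) * x j ≤ (1 - δ) * S := by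
    rw [div_mul_eq_mul_div, div_mul_eq_mul_div, div_le_div_iff₀ (by linarith) hMpos] at key
    nlinarith [key]
  refine ⟨hkey, ?_⟩
  rw [le_div_iff₀ hDpos]
  linarith [hkey]
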